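/- The algebra homomorphism R = K⟨x,y⟩/(xy−1) → End_K(V) sending x to the left shift and y to the right shift on V = K^{(ℕ)} is injective. -/

import Mathlib

noncomputable section

/-- The defining relation of the Toeplitz/Jacobson algebra: `x * y = 1`. -/
inductive ToeplitzRel (K : Type*) [Field K] :
    FreeAlgebra K (Fin 2) → FreeAlgebra K (Fin 2) → Prop
  | rel : ToeplitzRel K (FreeAlgebra.ι K 0 * FreeAlgebra.ι K 1) 1

/-- The Toeplitz/Jacobson algebra `R = K⟨x,y⟩/(xy-1)`. -/
abbrev Toeplitz (K : Type*) [Field K] := RingQuot (ToeplitzRel K)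

variable (K : Type*) [Field K]

/-- The image of the generator `x` in `R`. -/
def tx : Toeplitz K := RingQuot.mkAlgHom K (ToeplitzRel K) (FreeAlgebra.ι K 0)

/-- The image of the generator `y` in `R`. -/
def ty : Toeplitz K := RingQuot.mkAlgHom K (ToeplitzRel K) (FreeAlgebra.ι K 1)

/-- `f n = y^(n-1) x^(n-1) - y^n x^n`. -/
def tf (n : ℕ) : Toeplitz K := ty K ^ (n-1) * tx K ^ (n-1) - ty K ^ n * tx K ^ n

/-- The left shift on `V = K^(ℕ)`: `e_0 ↦ 0`, `e_{i+1} ↦ e_i`. -/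
def leftShift : (ℕ →₀ K) →ₗ[K] (ℕ →₀ K) :=
  Finsupp.lsum K fun i => match i with
    | 0 => 0
    | Nat.succ j => Finsupp.lsingle j

/-- The right shift on `V = K^(ℕ)`: `e_i ↦ e_{i+1}`. -/
def rightShift : (ℕ →₀ K) →ₗ[K] (ℕ →₀ K) :=
  Finsupp.lmapDomain K K Nat.succ

section Aux
variable {K}

lemma txy : tx K * ty K = 1 := by
  have := RingQuot.mkAlgHom_rel K (ToeplitzRel.rel (K := K))
  simpa [tx, ty, map_mul, map_one] using this

lemma txyn (n : ℕ) : tx K ^ n * ty K ^ n = 1 := by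
  induction n with
  | zero => simp
  | succ n ih =>
    rw [pow_succ, pow_succ', mul_assoc, ← mul_assoc (tx K), txy, one_mul, ih]

lemma leftShift_single_zero (a : K) : leftShift K (Finsupp.single 0 a) = 0 := by
  simp [leftShift, Finsupp.lsum_apply, Finsupp.sum_single_index]

lemma leftShift_single_succ (m : ℕ) (a : K) :
    leftShift K (Finsupp.single (m+1) a) = Finsupp.single m a := by
  simp [leftShift, Finsupp.lsum_apply, Finsupp.sum_single_index]

lemma rightShift_single (m : ℕ) (a : K) :
    rightShift K (Finsupp.single m a) = Finsupp.single (m+1) a := by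
  simp [rightShift, Finsupp.lmapDomain_apply, Finsupp.mapDomain_single]

lemma tx_ty_le {j k : ℕ} (h : j ≤ k) : tx K ^ j * ty K ^ k = ty K ^ (k - j) := by
  conv_lhs => rw [show k = j + (k - j) from (Nat.add_sub_cancel' h).symm]
  rw [pow_add, ← mul_assoc, txyn, one_mul]

lemma tx_ty_ge {j k : ℕ} (h : k ≤ j) : tx K ^ j * ty K ^ k = tx K ^ (j - k) := by
  conv_lhs => rw [show j = (j - k) + k from (Nat.sub_add_cancel h).symm]
  rw [pow_add, mul_assoc, txyn, mul_one]

lemma leftShift_pow_single (j m : ℕ) :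
    (leftShift K ^ j) (Finsupp.single m (1:K)) =
      if j ≤ m then Finsupp.single (m - j) 1 else 0 := by
  induction j generalizing m with
  | zero => simp
  | succ j ih =>
    rw [pow_succ, Module.End.mul_apply]
    cases m with
    | zero => simp [leftShift_single_zero]
    | succ m =>
      rw [leftShift_single_succ, ih]
      simp [Nat.succ_le_succ_iff, Nat.succ_sub_succ]

lemma rightShift_pow_single (i m : ℕ) :
    (rightShift K ^ i) (Finsupp.single m (1:K)) = Finsupp.single (m + i) 1 := by
  induction i generalizing m with
  | zero => simp
  | succ i ih =>
    rw [pow_succ, Module.End.mul_apply, rightShift_single, ih]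
    congr 1
    omega

lemma mono_mul (i j k l : ℕ) : ∃ p : ℕ × ℕ,
    (ty K ^ i * tx K ^ j) * (ty K ^ k * tx K ^ l) = ty K ^ p.1 * tx K ^ p.2 := by
  rcases le_or_gt j k with h | h
  · refine ⟨(i + (k - j), l), ?_⟩
    rw [mul_assoc, ← mul_assoc (tx K ^ j), tx_ty_le h, ← mul_assoc, ← pow_add]
  · refine ⟨(i, (j - k) + l), ?_⟩
    rw [mul_assoc, ← mul_assoc (tx K ^ j), tx_ty_ge h.le, ← pow_add]

lemma mem_span_mono (a : Toeplitz K) :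
    a ∈ Submodule.span K (Set.range fun p : ℕ × ℕ => ty K ^ p.1 * tx K ^ p.2) := by
  set S := Submodule.span K (Set.range fun p : ℕ × ℕ => ty K ^ p.1 * tx K ^ p.2) with hS
  have hmono : ∀ i j : ℕ, ty K ^ i * tx K ^ j ∈ S :=
    fun i j => Submodule.subset_span ⟨(i, j), rfl⟩
  have hmul : ∀ a ∈ S, ∀ b ∈ S, a * b ∈ S := by
    intro a ha
    refine Submodule.span_induction (p := fun a _ => ∀ b ∈ S, a * b ∈ S) ?_ ?_ ?_ ?_ ha
    · rintro x ⟨⟨i, j⟩, rfl⟩ b hb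
      refine Submodule.span_induction (p := fun b _ => (ty K ^ i * tx K ^ j) * b ∈ S)
        ?_ ?_ ?_ ?_ hb
      · rintro y ⟨⟨k, l⟩, rfl⟩
        obtain ⟨p, hp⟩ := mono_mul (K := K) i j k l
        rw [hp]; exact hmono _ _
      · simp
      · intro x y _ _ h1 h2; rw [mul_add]; exact S.add_mem h1 h2
      · intro r x _ h1; rw [mul_smul_comm]; exact S.smul_mem r h1
    · intro b _; simp
    · intro x y _ _ h1 h2 b hb; rw [add_mul]; exact S.add_mem (h1 b hb) (h2 b hb)
    · intro r x _ h1 b hb; rw [smul_mul_assoc]; exact S.smul_mem r (h1 b hb)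
  obtain ⟨b, rfl⟩ := RingQuot.mkAlgHom_surjective K (ToeplitzRel K) a
  induction b with
  | grade0 r =>
    rw [AlgHom.commutes, Algebra.algebraMap_eq_smul_one]
    have : (1 : Toeplitz K) = ty K ^ 0 * tx K ^ 0 := by simp
    rw [this]
    exact S.smul_mem r (hmono 0 0)
  | grade1 x =>
    fin_cases x
    · show RingQuot.mkAlgHom K (ToeplitzRel K) (FreeAlgebra.ι K 0) ∈ S
      have : RingQuot.mkAlgHom K (ToeplitzRel K) (FreeAlgebra.ι K 0) = ty K ^ 0 * tx K ^ 1 := by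
        simp [tx]
      rw [this]; exact hmono 0 1
    · show RingQuot.mkAlgHom K (ToeplitzRel K) (FreeAlgebra.ι K 1) ∈ S
      have : RingQuot.mkAlgHom K (ToeplitzRel K) (FreeAlgebra.ι K 1) = ty K ^ 1 * tx K ^ 0 := by
        simp [ty]
      rw [this]; exact hmono 1 0
  | mul a b ha hb => rw [map_mul]; exact hmul _ ha _ hb
  | add a b ha hb => rw [map_add]; exact S.add_mem ha hb

lemma coeffs_zero (φ : Toeplitz K →ₐ[K] Module.End K (ℕ →₀ K))
    (hx : φ (tx K) = leftShift K) (hy : φ (ty K) = rightShift K)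
    (c : (ℕ × ℕ) →₀ K)
    (h : φ (c.sum fun p a => a • (ty K ^ p.1 * tx K ^ p.2)) = 0) : c = 0 := by
  by_contra hc
  have hsupp : c.support.Nonempty := Finsupp.support_nonempty_iff.mpr hc
  have hsne : (c.support.image Prod.snd).Nonempty := hsupp.image _
  set j₀ := (c.support.image Prod.snd).min' hsne with hj₀
  obtain ⟨p₀, hp₀, hp₀2⟩ := Finset.mem_image.mp ((c.support.image Prod.snd).min'_mem hsne)
  have hmin : ∀ p ∈ c.support, j₀ ≤ p.2 := fun p hp =>
    Finset.min'_le _ _ (Finset.mem_image_of_mem _ hp)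
  have h1 : (c.sum fun p a => a • ((rightShift K ^ p.1) * (leftShift K ^ p.2))) = 0 := by
    rw [← h, map_finsuppSum]
    exact (Finsupp.sum_congr fun p _ => by
      rw [map_smul, map_mul, map_pow, map_pow, hx, hy]).symm
  have h2 : ∑ p ∈ c.support,
      c p * (((rightShift K ^ p.1) ((leftShift K ^ p.2) (Finsupp.single j₀ (1:K)))) p₀.1)
      = 0 := by
    have := congrArg (fun T : Module.End K (ℕ →₀ K) => (T (Finsupp.single j₀ (1:K))) p₀.1) h1
    simpa [Finsupp.sum, LinearMap.sum_apply, Module.End.mul_apply,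
      Finsupp.finset_sum_apply, Finsupp.smul_apply, smul_eq_mul] using this
  rw [Finset.sum_eq_single p₀] at h2
  · rw [leftShift_pow_single, if_pos (le_of_eq hp₀2), hp₀2] at h2
    simp [rightShift_pow_single, Finsupp.single_apply] at h2
    exact (Finsupp.mem_support_iff.mp hp₀) (h2 (by simp [hj₀]))
  · intro p hp hne
    have hle := hmin p hp
    rcases eq_or_lt_of_le hle with heq | hlt
    · have hne1 : p.1 ≠ p₀.1 := by
        intro h'
        exact hne (Prod.ext h' (heq.symm.trans hp₀2.symm))
      rw [leftShift_pow_single, if_pos (le_of_eq heq.symm), ← heq]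
      simp [rightShift_pow_single, Finsupp.single_apply, hne1]
    · rw [leftShift_pow_single, if_neg (not_le.mpr hlt)]
      simp
  · intro h'
    exact absurd hp₀ h'

end Aux

/-- The algebra homomorphism `R = K⟨x,y⟩/(xy-1) → End_K(V)` sending `x` to the left
shift and `y` to the right shift on `V = K^(ℕ)` is injective. -/
theorem toeplitz_shift_representation_injective
    (φ : Toeplitz K →ₐ[K] Module.End K (ℕ →₀ K))
    (hx : φ (tx K) = leftShift K) (hy : φ (ty K) = rightShift K) :
    Function.Injective φ := by
  refine (injective_iff_map_eq_zero φ).mpr ?_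
  intro a ha
  obtain ⟨c, rfl⟩ := Finsupp.mem_span_range_iff_exists_finsupp.mp (mem_span_mono a)
  rw [coeffs_zero φ hx hy c ha, Finsupp.sum_zero_index]
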